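/- Let m, n, p, q be natural numbers with m ≤ n. Let A be an m×n complex matrix, B an n×m complex matrix, and let H00, H01, H10, H11 be complex matrices of sizes p×p, p×q, q×p, q×q respectively. Then there exists σ : Fin m → ℂ such that the characteristic polynomial of the m×m matrix A·B equals ∏_{j : Fin m} (X − (σ j)²), and the characteristic polynomial of the (m·p+n·q)×(m·p+n·q) block matrix [[I_m ⊗ H00, A ⊗ H01], [B ⊗ H10, I_n ⊗ H11]] equals (∏_{j : Fin m} charpoly(H↑(σ j))) · (charpoly(H11))^(n−m). -/
import Mathlib

open Matrix Polynomial Kronecker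

set_option maxHeartbeats 1000000 in
theorem exists_triangularization : ∀ (k : ℕ) (M : Matrix (Fin k) (Fin k) ℂ),
    ∃ U W T : Matrix (Fin k) (Fin k) ℂ,
      U * W = 1 ∧ W * U = 1 ∧ T.BlockTriangular id ∧ M = U * T * W := by
  intro k
  induction k with
  | zero =>
    intro M
    exact ⟨1, 1, M, by simp, by simp, fun i j _ => i.elim0, by simp⟩
  | succ k IH =>
    intro M
    obtain ⟨μ, hμ⟩ := Module.End.exists_eigenvalue M.mulVecLin
    obtain ⟨v, hv⟩ := hμ.exists_hasEigenvector
    obtain ⟨i₀, hi₀⟩ := Function.ne_iff.mp hv.right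
    replace hi₀ : v i₀ ≠ 0 := hi₀
    set P₀ : Matrix (Fin (k+1)) (Fin (k+1)) ℂ := (1 : Matrix _ _ ℂ).updateCol i₀ v with hP₀
    have hP₀det : P₀.det = v i₀ := by
      have := Matrix.cramer_apply (1 : Matrix (Fin (k+1)) (Fin (k+1)) ℂ) v i₀
      rw [Matrix.cramer_one] at this
      exact this.symm
    set P : Matrix (Fin (k+1)) (Fin (k+1)) ℂ := P₀.submatrix id (Equiv.swap 0 i₀) with hP
    have hPdet : IsUnit P.det := by
      rw [hP, Matrix.det_permute', hP₀det, isUnit_iff_ne_zero]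
      rcases Int.units_eq_one_or (Equiv.Perm.sign (Equiv.swap 0 i₀)) with h | h <;>
        simp [h, hi₀]
    have hP1 : P * P⁻¹ = 1 := Matrix.mul_nonsing_inv _ hPdet
    have hP2 : P⁻¹ * P = 1 := Matrix.nonsing_inv_mul _ hPdet
    set Q : Matrix (Fin (k+1)) (Fin (k+1)) ℂ := P⁻¹ * M * P with hQdef
    set e0 : Fin (k+1) → ℂ := Pi.single 0 1 with he0
    have hPcol : (P *ᵥ e0) = v := by
      funext i
      simp [hP, hP₀, he0, Matrix.mulVec_single, Matrix.submatrix_apply,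
        Matrix.updateCol_self]
    have hQvec : Q *ᵥ e0 = μ • e0 := by
      have hMv : M *ᵥ v = μ • v := hv.apply_eq_smul
      calc Q *ᵥ e0 = P⁻¹ *ᵥ (M *ᵥ (P *ᵥ e0)) := by
            rw [hQdef, ← Matrix.mulVec_mulVec, ← Matrix.mulVec_mulVec]
        _ = μ • (P⁻¹ *ᵥ (P *ᵥ e0)) := by rw [hPcol, hMv, Matrix.mulVec_smul]
        _ = μ • e0 := by rw [Matrix.mulVec_mulVec, hP2, Matrix.one_mulVec]
    have hQ0 : ∀ i : Fin (k+1), i ≠ 0 → Q i 0 = 0 := by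
      intro i hi
      have := congrFun hQvec i
      simpa [he0, Matrix.mulVec_single, Pi.single_apply, hi] using this
    set ee : Fin 1 ⊕ Fin k ≃ Fin (k+1) := finSumFinEquiv.trans (finCongr (Nat.add_comm 1 k)) with hee
    have hee1 : ee (Sum.inl 0) = 0 := by
      apply Fin.ext; simp [hee]
    have hee2 : ∀ j : Fin k, (ee (Sum.inr j) : ℕ) = j + 1 := by
      intro j; simp [hee]
    set Qa : Matrix (Fin 1) (Fin 1) ℂ := Matrix.of fun i j => Q (ee (Sum.inl i)) (ee (Sum.inl j)) with hQa
    set r : Matrix (Fin 1) (Fin k) ℂ := Matrix.of fun i j => Q (ee (Sum.inl i)) (ee (Sum.inr j)) with hr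
    set M' : Matrix (Fin k) (Fin k) ℂ := Matrix.of fun i j => Q (ee (Sum.inr i)) (ee (Sum.inr j)) with hM'
    have hQ' : Q.submatrix ee ee = fromBlocks Qa r 0 M' := by
      ext i j
      cases i with
      | inl i => cases j with
        | inl j => rfl
        | inr j => rfl
      | inr i => cases j with
        | inl j =>
          have hj : j = 0 := Subsingleton.elim _ _
          subst hj
          have hne : ee (Sum.inr i) ≠ 0 := by
            rw [← hee1]; exact fun h => by simpa using ee.injective h
          simp [Matrix.fromBlocks, hQ0 _ hne, hee1]
        | inr j => rfl
    obtain ⟨U', W', T', h1', h2', h3', h4'⟩ := IH M'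
    set V : Matrix (Fin 1 ⊕ Fin k) (Fin 1 ⊕ Fin k) ℂ := fromBlocks 1 0 0 U' with hV
    set Vi : Matrix (Fin 1 ⊕ Fin k) (Fin 1 ⊕ Fin k) ℂ := fromBlocks 1 0 0 W' with hVi
    set T'' : Matrix (Fin 1 ⊕ Fin k) (Fin 1 ⊕ Fin k) ℂ := fromBlocks Qa (r * U') 0 T' with hT''
    have hVVi : V * Vi = 1 := by
      rw [hV, hVi, Matrix.fromBlocks_multiply]
      simp [h1', Matrix.fromBlocks_one]
    have hViV : Vi * V = 1 := by
      rw [hV, hVi, Matrix.fromBlocks_multiply]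
      simp [h2', Matrix.fromBlocks_one]
    have hsub : ∀ X Y : Matrix (Fin 1 ⊕ Fin k) (Fin 1 ⊕ Fin k) ℂ,
        X.submatrix ee.symm ee.symm * Y.submatrix ee.symm ee.symm
          = (X * Y).submatrix ee.symm ee.symm := fun X Y =>
      Matrix.submatrix_mul_equiv X Y _ ee.symm _
    have hsub3 : ∀ X Y : Matrix (Fin 1 ⊕ Fin k) (Fin 1 ⊕ Fin k) ℂ,
        ∀ Z : Matrix (Fin (k+1)) (Fin (k+1)) ℂ,
        X.submatrix ee.symm ee.symm * (Y.submatrix ee.symm ee.symm * Z)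
          = (X * Y).submatrix ee.symm ee.symm * Z := fun X Y Z => by
      rw [← Matrix.mul_assoc, hsub]
    have hQsub : (Q.submatrix ee ee).submatrix ee.symm ee.symm = Q := by
      rw [Matrix.submatrix_submatrix]
      simp [Equiv.self_comp_symm]
    have key : V * T'' * Vi = Q.submatrix ee ee := by
      rw [Matrix.mul_assoc, hQ']
      have s1 : T'' * Vi = fromBlocks Qa (r * U' * W') 0 (T' * W') := by
        rw [hT'', hVi, Matrix.fromBlocks_multiply]
        simp
      rw [s1, hV, Matrix.fromBlocks_multiply]
      rw [Matrix.mul_assoc r, h1', Matrix.mul_one]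
      simp [← Matrix.mul_assoc, ← h4']
    refine ⟨P * V.submatrix ee.symm ee.symm, Vi.submatrix ee.symm ee.symm * P⁻¹,
      T''.submatrix ee.symm ee.symm, ?_, ?_, ?_, ?_⟩
    · calc P * V.submatrix ee.symm ee.symm * (Vi.submatrix ee.symm ee.symm * P⁻¹)
          = P * (V.submatrix ee.symm ee.symm * Vi.submatrix ee.symm ee.symm) * P⁻¹ := by
            simp only [Matrix.mul_assoc]
        _ = 1 := by rw [hsub, hVVi, Matrix.submatrix_one_equiv, Matrix.mul_one, hP1]
    · calc Vi.submatrix ee.symm ee.symm * P⁻¹ * (P * V.submatrix ee.symm ee.symm)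
          = Vi.submatrix ee.symm ee.symm * ((P⁻¹ * P) * V.submatrix ee.symm ee.symm) := by
            simp only [Matrix.mul_assoc]
        _ = 1 := by rw [hP2, Matrix.one_mul, hsub, hViV, Matrix.submatrix_one_equiv]
    · intro a b hab
      simp only [Matrix.submatrix_apply]
      have ha : a = ee (ee.symm a) := (ee.apply_symm_apply a).symm
      have hb : b = ee (ee.symm b) := (ee.apply_symm_apply b).symm
      rcases h : ee.symm a with i | i <;> rcases h' : ee.symm b with j | j
      · exfalso
        rw [h] at ha; rw [h'] at hb
        have : a = b := by
          rw [ha, hb, Subsingleton.elim i j]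
        exact absurd hab (by rw [this]; exact lt_irrefl _)
      · exfalso
        rw [h] at ha; rw [h'] at hb
        have ha0 : (a : ℕ) = 0 := by
          rw [ha, Subsingleton.elim i 0, hee1]; rfl
        have hb0 : (b : ℕ) = j + 1 := by rw [hb]; exact hee2 j
        have : (b : ℕ) < (a : ℕ) := hab
        omega
      · simp [hT'', Matrix.fromBlocks]
      · have hij : (j : ℕ) < i := by
          rw [h] at ha; rw [h'] at hb
          have ha0 : (a : ℕ) = i + 1 := by rw [ha]; exact hee2 i
          have hb0 : (b : ℕ) = j + 1 := by rw [hb]; exact hee2 j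
          have : (b : ℕ) < (a : ℕ) := hab
          omega
        simp only [hT'', Matrix.fromBlocks_apply₂₂]
        exact h3' hij
    · refine Eq.symm ?_
      calc P * V.submatrix ee.symm ee.symm * T''.submatrix ee.symm ee.symm *
            (Vi.submatrix ee.symm ee.symm * P⁻¹)
          = P * (V.submatrix ee.symm ee.symm * (T''.submatrix ee.symm ee.symm *
              (Vi.submatrix ee.symm ee.symm * P⁻¹))) := by
            simp only [Matrix.mul_assoc]
        _ = P * ((V * T'' * Vi).submatrix ee.symm ee.symm * P⁻¹) := by
            rw [hsub3, hsub3]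
        _ = P * ((Q.submatrix ee ee).submatrix ee.symm ee.symm * P⁻¹) := by rw [key]
        _ = P * (Q * P⁻¹) := by rw [hQsub]
        _ = M := by
            rw [hQdef]
            calc P * (P⁻¹ * M * P * P⁻¹) = (P * P⁻¹) * M * (P * P⁻¹) := by
                  simp only [Matrix.mul_assoc]
              _ = M := by rw [hP1, Matrix.one_mul, Matrix.mul_one]


set_option maxHeartbeats 1000000
set_option synthInstance.maxHeartbeats 400000

-- helper: Kronecker product commutes with ring hom entrywise map
private lemma map_kron {R S : Type*} [CommSemiring R] [CommSemiring S] (f : R →+* S)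
    {l m n o : Type*} (A : Matrix l m R) (B : Matrix n o R) :
    (A ⊗ₖ B).map f = (A.map f) ⊗ₖ (B.map f) := by
  ext i j
  simp [Matrix.kroneckerMap_apply, Matrix.map_apply]

private lemma kron_sub {R : Type*} [CommRing R] {l m n o : Type*}
    (A : Matrix l m R) (B C : Matrix n o R) :
    A ⊗ₖ (B - C) = A ⊗ₖ B - A ⊗ₖ C := by
  ext i j
  simp [Matrix.kroneckerMap_apply, mul_sub]

private lemma fromBlocks_sub {R : Type*} [CommRing R] {l m n o : Type*}
    (A A' : Matrix n l R) (B B' : Matrix n m R) (C C' : Matrix o l R) (D D' : Matrix o m R) :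
    fromBlocks A B C D - fromBlocks A' B' C' D'
      = fromBlocks (A - A') (B - B') (C - C') (D - D') := by
  ext i j
  rcases i with i | i <;> rcases j with j | j <;> simp [Matrix.fromBlocks]

private lemma charpoly_conj {n R : Type*} [Fintype n] [DecidableEq n] [CommRing R]
    (U T W : Matrix n n R) (h1 : U * W = 1) : (U * T * W).charpoly = T.charpoly := by
  have hmap1 : (U.map (C : R → R[X])) * (W.map C) = 1 := by
    rw [← Matrix.map_mul (f := (C : R →+* R[X])), h1]
    simp
  have hkey : charmatrix (U * T * W) = U.map C * charmatrix T * W.map C := by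
    rw [charmatrix, charmatrix, Matrix.mul_sub, Matrix.sub_mul]
    congr 1
    · have hc : Commute (Matrix.scalar n (X : R[X])) (W.map C) :=
        Matrix.scalar_commute _ (fun r' => Commute.all _ _) _
      rw [Matrix.mul_assoc, hc.eq, ← Matrix.mul_assoc, hmap1, Matrix.one_mul]
    · simp only [RingHom.mapMatrix_apply]
      rw [Matrix.map_mul (f := (C : R →+* R[X])), Matrix.map_mul (f := (C : R →+* R[X]))]
  rw [Matrix.charpoly, Matrix.charpoly, hkey, Matrix.det_mul, Matrix.det_mul]
  calc (U.map C).det * (charmatrix T).det * (W.map C).det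
      = (charmatrix T).det * ((U.map C) * (W.map C)).det := by
        rw [Matrix.det_mul]; ring
    _ = (charmatrix T).det := by rw [hmap1, Matrix.det_one, mul_one]

private def blockEquiv {μ ρ : Type*} (k : μ) : ρ ≃ {a : μ × ρ // a.1 = k} where
  toFun α := ⟨(k, α), rfl⟩
  invFun s := s.1.2
  left_inv α := rfl
  right_inv := by rintro ⟨⟨i, α⟩, rfl⟩; rfl

private lemma phi_charpoly {n : Type*} [Fintype n] [DecidableEq n] (M : Matrix n n ℂ) :
    algebraMap (Polynomial ℂ) (RatFunc ℂ) M.charpoly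
      = ((algebraMap (Polynomial ℂ) (RatFunc ℂ) X) • (1 : Matrix n n (RatFunc ℂ))
          - M.map ((algebraMap (Polynomial ℂ) (RatFunc ℂ)).comp (C : ℂ →+* Polynomial ℂ))).det := by
  rw [Matrix.charpoly, RingHom.map_det]
  congr 1
  ext i j
  by_cases h : i = j <;>
    simp [charmatrix_apply, Matrix.diagonal_apply, h, Matrix.one_apply, Matrix.map_apply,
      RingHom.mapMatrix_apply, Matrix.smul_apply, smul_eq_mul]

private lemma map_smul'' {R S : Type*} [CommSemiring R] [CommSemiring S] (f : R →+* S)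
    {l m : Type*} (r : R) (M : Matrix l m R) : (r • M).map f = f r • M.map f := by
  ext i j
  simp [Matrix.map_apply, Matrix.smul_apply, smul_eq_mul]

set_option maxHeartbeats 4000000 in
theorem stmt4 (m n p q : ℕ) (hmn : m ≤ n)
    (A : Matrix (Fin m) (Fin n) ℂ) (B : Matrix (Fin n) (Fin m) ℂ)
    (H00 : Matrix (Fin p) (Fin p) ℂ) (H01 : Matrix (Fin p) (Fin q) ℂ)
    (H10 : Matrix (Fin q) (Fin p) ℂ) (H11 : Matrix (Fin q) (Fin q) ℂ) :
    ∃ σ : Fin m → ℂ,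
      (A * B).charpoly = ∏ j : Fin m, (X - C (σ j ^ 2)) ∧
      (Matrix.fromBlocks ((1 : Matrix (Fin m) (Fin m) ℂ) ⊗ₖ H00) (A ⊗ₖ H01)
          (B ⊗ₖ H10) ((1 : Matrix (Fin n) (Fin n) ℂ) ⊗ₖ H11)).charpoly =
        (∏ j : Fin m,
          (Matrix.fromBlocks H00 (σ j • H01) (σ j • H10) H11).charpoly) *
          H11.charpoly ^ (n - m) := by
  obtain ⟨U, W, T, hUW, hWU, hT, hAB⟩ := exists_triangularization m (A * B)
  have hsq : ∀ j : Fin m, ∃ s : ℂ, s ^ 2 = T j j := fun j =>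
    IsAlgClosed.exists_pow_nat_eq _ two_pos
  choose σ hσ using hsq
  refine ⟨σ, ?_, ?_⟩
  · rw [hAB, charpoly_conj U T W hUW, Matrix.charpoly_of_upperTriangular T hT]
    exact Finset.prod_congr rfl fun j _ => by rw [hσ j]
  · apply RatFunc.algebraMap_injective ℂ
    set φ : Polynomial ℂ →+* RatFunc ℂ := algebraMap (Polynomial ℂ) (RatFunc ℂ) with hφdef
    set cc : ℂ →+* RatFunc ℂ := φ.comp (C : ℂ →+* Polynomial ℂ) with hcc
    set xx : RatFunc ℂ := φ X with hxx
    set h00 := H00.map cc with hh00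
    set h01 := H01.map cc with hh01
    set h10 := H10.map cc with hh10
    set h11 := H11.map cc with hh11
    set a := A.map cc with ha
    set b := B.map cc with hb
    set u := U.map cc with hu
    set w := W.map cc with hw
    set t := T.map cc with ht
    set g : Matrix (Fin p) (Fin p) (RatFunc ℂ) := xx • 1 - h00 with hg
    set d : Matrix (Fin q) (Fin q) (RatFunc ℂ) := xx • 1 - h11 with hd
    have hdet_d : d.det = φ H11.charpoly := (phi_charpoly H11).symm
    have hdet_d_unit : IsUnit d.det := by
      rw [hdet_d, isUnit_iff_ne_zero]
      intro h
      have h0 : φ H11.charpoly = φ 0 := by rw [h, map_zero]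
      exact (Matrix.charpoly_monic H11).ne_zero (RatFunc.algebraMap_injective ℂ h0)
    have hd1 : d * d⁻¹ = 1 := Matrix.mul_nonsing_inv _ hdet_d_unit
    set N := h01 * d⁻¹ * h10 with hN
    have huw : u * w = 1 := by
      rw [hu, hw, ← Matrix.map_mul (f := cc), hUW, Matrix.map_one _ (map_zero cc) (map_one cc)]
    have hab : a * b = u * t * w := by
      rw [ha, hb, hu, ht, hw, ← Matrix.map_mul (f := cc), hAB,
        Matrix.map_mul (f := cc), Matrix.map_mul (f := cc)]
    -- RHS
    have hRHS : φ ((∏ j : Fin m,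
          (Matrix.fromBlocks H00 (σ j • H01) (σ j • H10) H11).charpoly) *
          H11.charpoly ^ (n - m))
        = (∏ j : Fin m, d.det * (g - cc (T j j) • N).det) * d.det ^ (n - m) := by
      rw [_root_.map_mul, map_pow, ← hdet_d, map_prod]
      congr 1
      refine Finset.prod_congr rfl fun j _ => ?_
      rw [phi_charpoly]
      have hmap : (Matrix.fromBlocks H00 (σ j • H01) (σ j • H10) H11).map cc
          = fromBlocks h00 (cc (σ j) • h01) (cc (σ j) • h10) h11 := by
        rw [Matrix.fromBlocks_map, map_smul'' cc, map_smul'' cc]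
      have hsplit : xx • (1 : Matrix (Fin p ⊕ Fin q) (Fin p ⊕ Fin q) (RatFunc ℂ))
          = fromBlocks (xx • 1) 0 0 (xx • 1) := by
        rw [← Matrix.fromBlocks_one, Matrix.fromBlocks_smul, smul_zero, smul_zero]
      rw [hmap, hsplit, fromBlocks_sub, zero_sub, zero_sub, ← hg, ← hd]
      haveI := Matrix.invertibleOfIsUnitDet d hdet_d_unit
      rw [Matrix.det_fromBlocks₂₂, Matrix.invOf_eq_nonsing_inv]
      have hfac : (-(cc (σ j) • h01)) * d⁻¹ * (-(cc (σ j) • h10)) = cc (T j j) • N := by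
        rw [Matrix.neg_mul, Matrix.neg_mul, Matrix.mul_neg, neg_neg, Matrix.smul_mul,
          Matrix.smul_mul, Matrix.mul_smul, smul_smul, ← _root_.map_mul, ← sq, hσ j, hN]
      rw [hfac]
    -- LHS
    have hbigmap : (Matrix.fromBlocks ((1 : Matrix (Fin m) (Fin m) ℂ) ⊗ₖ H00) (A ⊗ₖ H01)
          (B ⊗ₖ H10) ((1 : Matrix (Fin n) (Fin n) ℂ) ⊗ₖ H11)).map cc
        = fromBlocks ((1 : Matrix (Fin m) (Fin m) (RatFunc ℂ)) ⊗ₖ h00) (a ⊗ₖ h01)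
          (b ⊗ₖ h10) ((1 : Matrix (Fin n) (Fin n) (RatFunc ℂ)) ⊗ₖ h11) := by
      rw [Matrix.fromBlocks_map, map_kron cc, map_kron cc, map_kron cc, map_kron cc,
        Matrix.map_one _ (map_zero cc) (map_one cc), Matrix.map_one _ (map_zero cc) (map_one cc)]
    have hkron_g : (1 : Matrix (Fin m) (Fin m) (RatFunc ℂ)) ⊗ₖ g
        = xx • (1 : Matrix (Fin m × Fin p) (Fin m × Fin p) (RatFunc ℂ)) - 1 ⊗ₖ h00 := by
      rw [hg, kron_sub, Matrix.kronecker_smul, Matrix.one_kronecker_one]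
    have hkron_d : (1 : Matrix (Fin n) (Fin n) (RatFunc ℂ)) ⊗ₖ d
        = xx • (1 : Matrix (Fin n × Fin q) (Fin n × Fin q) (RatFunc ℂ)) - 1 ⊗ₖ h11 := by
      rw [hd, kron_sub, Matrix.kronecker_smul, Matrix.one_kronecker_one]
    have hdet_kron_d : ((1 : Matrix (Fin n) (Fin n) (RatFunc ℂ)) ⊗ₖ d).det = d.det ^ n := by
      rw [Matrix.det_kronecker]
      simp [Fintype.card_fin]
    have hkron_d_unit : IsUnit ((1 : Matrix (Fin n) (Fin n) (RatFunc ℂ)) ⊗ₖ d).det := by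
      rw [hdet_kron_d]; exact hdet_d_unit.pow n
    have hinv_kron : ((1 : Matrix (Fin n) (Fin n) (RatFunc ℂ)) ⊗ₖ d)⁻¹ = 1 ⊗ₖ d⁻¹ :=
      Matrix.inv_eq_right_inv (by
        rw [← Matrix.mul_kronecker_mul, Matrix.one_mul, hd1, Matrix.one_kronecker_one])
    have hsplit2 : xx • (1 : Matrix ((Fin m × Fin p) ⊕ (Fin n × Fin q))
          ((Fin m × Fin p) ⊕ (Fin n × Fin q)) (RatFunc ℂ))
        = fromBlocks (xx • 1) 0 0 (xx • 1) := by
      rw [← Matrix.fromBlocks_one, Matrix.fromBlocks_smul, smul_zero, smul_zero]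
    have hmid : (-(a ⊗ₖ h01)) * ((1 : Matrix (Fin n) (Fin n) (RatFunc ℂ)) ⊗ₖ d⁻¹) * (-(b ⊗ₖ h10))
        = (a * b) ⊗ₖ N := by
      calc (-(a ⊗ₖ h01)) * ((1 : Matrix (Fin n) (Fin n) (RatFunc ℂ)) ⊗ₖ d⁻¹) * (-(b ⊗ₖ h10))
          = (a ⊗ₖ h01) * ((1 : Matrix (Fin n) (Fin n) (RatFunc ℂ)) ⊗ₖ d⁻¹) * (b ⊗ₖ h10) := by
            rw [Matrix.neg_mul, Matrix.neg_mul, Matrix.mul_neg, neg_neg]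
        _ = ((a * (1 : Matrix (Fin n) (Fin n) (RatFunc ℂ))) ⊗ₖ (h01 * d⁻¹)) * (b ⊗ₖ h10) := by
            rw [← Matrix.mul_kronecker_mul]
        _ = (a * (1 : Matrix (Fin n) (Fin n) (RatFunc ℂ)) * b) ⊗ₖ (h01 * d⁻¹ * h10) := by
            rw [← Matrix.mul_kronecker_mul]
        _ = (a * b) ⊗ₖ N := by rw [Matrix.mul_one, hN]
    have hconj : (1 : Matrix (Fin m) (Fin m) (RatFunc ℂ)) ⊗ₖ g - (u * t * w) ⊗ₖ N
        = (u ⊗ₖ (1 : Matrix (Fin p) (Fin p) (RatFunc ℂ))) * (1 ⊗ₖ g - t ⊗ₖ N) * (w ⊗ₖ 1) := by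
      refine Eq.symm ?_
      calc (u ⊗ₖ (1 : Matrix (Fin p) (Fin p) (RatFunc ℂ))) * (1 ⊗ₖ g - t ⊗ₖ N) * (w ⊗ₖ 1)
          = (u ⊗ₖ 1) * (1 ⊗ₖ g) * (w ⊗ₖ 1) - (u ⊗ₖ 1) * (t ⊗ₖ N) * (w ⊗ₖ 1) := by
            rw [Matrix.mul_sub, Matrix.sub_mul]
        _ = (u * 1 * w) ⊗ₖ ((1 : Matrix (Fin p) (Fin p) (RatFunc ℂ)) * g * 1)
              - (u * t * w) ⊗ₖ ((1 : Matrix (Fin p) (Fin p) (RatFunc ℂ)) * N * 1) := by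
            rw [Matrix.mul_kronecker_mul, Matrix.mul_kronecker_mul, Matrix.mul_kronecker_mul,
              Matrix.mul_kronecker_mul]
        _ = (1 : Matrix (Fin m) (Fin m) (RatFunc ℂ)) ⊗ₖ g - (u * t * w) ⊗ₖ N := by
            rw [Matrix.mul_one u, huw, Matrix.one_mul g, Matrix.mul_one g,
              Matrix.one_mul N, Matrix.mul_one N]
    have hdet_uw : (u ⊗ₖ (1 : Matrix (Fin p) (Fin p) (RatFunc ℂ))).det * ((w ⊗ₖ 1) :
        Matrix (Fin m × Fin p) (Fin m × Fin p) (RatFunc ℂ)).det = 1 := by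
      rw [← Matrix.det_mul, ← Matrix.mul_kronecker_mul, huw, Matrix.one_mul,
        Matrix.one_kronecker_one, Matrix.det_one]
    have htri : ((1 : Matrix (Fin m) (Fin m) (RatFunc ℂ)) ⊗ₖ g - t ⊗ₖ N).BlockTriangular
        Prod.fst := by
      intro x y hxy
      have h1 : (1 : Matrix (Fin m) (Fin m) (RatFunc ℂ)) x.1 y.1 = 0 :=
        Matrix.one_apply_ne (ne_of_gt hxy)
      have h2 : t x.1 y.1 = 0 := by
        rw [ht, Matrix.map_apply, hT hxy, map_zero]
      simp only [Matrix.sub_apply, Matrix.kroneckerMap_apply, h1, h2, zero_mul, sub_zero]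
    have hdet_tri : ((1 : Matrix (Fin m) (Fin m) (RatFunc ℂ)) ⊗ₖ g - t ⊗ₖ N).det
        = ∏ k : Fin m, (g - cc (T k k) • N).det := by
      rw [htri.det_fintype]
      refine Finset.prod_congr rfl fun k _ => ?_
      rw [← Matrix.det_submatrix_equiv_self (blockEquiv k)
        (((1 : Matrix (Fin m) (Fin m) (RatFunc ℂ)) ⊗ₖ g - t ⊗ₖ N).toSquareBlock Prod.fst k)]
      congr 1
      ext α β
      simp only [Matrix.submatrix_apply, Matrix.toSquareBlock_def, Matrix.of_apply,
        blockEquiv, Equiv.coe_fn_mk, Matrix.sub_apply, Matrix.kroneckerMap_apply,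
        Matrix.one_apply_eq, one_mul, Matrix.smul_apply, smul_eq_mul, ht, Matrix.map_apply]
    -- assemble
    rw [hRHS, phi_charpoly, hbigmap, hsplit2, fromBlocks_sub, zero_sub, zero_sub,
      ← hkron_g, ← hkron_d]
    haveI := Matrix.invertibleOfIsUnitDet _ hkron_d_unit
    rw [Matrix.det_fromBlocks₂₂, Matrix.invOf_eq_nonsing_inv, hinv_kron, hmid, hab, hconj,
      Matrix.det_mul, Matrix.det_mul, hdet_kron_d]
    calc d.det ^ n * ((u ⊗ₖ (1 : Matrix (Fin p) (Fin p) (RatFunc ℂ))).det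
            * ((1 : Matrix (Fin m) (Fin m) (RatFunc ℂ)) ⊗ₖ g - t ⊗ₖ N).det
            * ((w ⊗ₖ 1) : Matrix (Fin m × Fin p) (Fin m × Fin p) (RatFunc ℂ)).det)
        = d.det ^ n * (((1 : Matrix (Fin m) (Fin m) (RatFunc ℂ)) ⊗ₖ g - t ⊗ₖ N).det
            * ((u ⊗ₖ (1 : Matrix (Fin p) (Fin p) (RatFunc ℂ))).det
              * ((w ⊗ₖ 1) : Matrix (Fin m × Fin p) (Fin m × Fin p) (RatFunc ℂ)).det)) := by
          ring
      _ = d.det ^ n * ∏ k : Fin m, (g - cc (T k k) • N).det := by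
          rw [hdet_uw, mul_one, hdet_tri]
      _ = (∏ j : Fin m, d.det * (g - cc (T j j) • N).det) * d.det ^ (n - m) := by
          rw [Finset.prod_mul_distrib, Finset.prod_const, Finset.card_univ, Fintype.card_fin]
          have hpow : d.det ^ n = d.det ^ m * d.det ^ (n - m) := by
            rw [← pow_add, Nat.add_sub_cancel' hmn]
          rw [hpow]; ring
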